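/- Let t < t₀ and suppose f : [t, t₀) → ℝ is differentiable and satisfies −f'(s) ≤ (1/2) R(s) − f(s)/(2(t₀ − s)) for all s ∈ [t, t₀), where R : [t, t₀) → ℝ is continuous and integrable against √(t₀−s). If √(t₀ − t₁) · f(t₁) → 0 as t₁ → t₀⁻ (e.g. f is bounded near t₀), then f(t) ≤ (1/(2√(t₀ − t))) ∫_t^{t₀} √(t₀ − s) R(s) ds. -/

import Mathlib

open Set Filter MeasureTheory intervalIntegral Real

/-- Integrating Perelman's Harnack inequality: if `-f'(s) ≤ (1/2) R s - f s /(2(t₀-s))`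
on `[t, t₀)` and `√(t₀-t₁) f(t₁) → 0` as `t₁ → t₀⁻`, then
`f t ≤ (1/(2√(t₀-t))) ∫_t^{t₀} √(t₀-s) R(s) ds`. -/
theorem stmt_5 (t t₀ : ℝ) (h : t < t₀) (f f' R : ℝ → ℝ)
    (hR : ContinuousOn R (Set.Ico t t₀))
    (hint : IntervalIntegrable (fun s => Real.sqrt (t₀ - s) * R s)
      MeasureTheory.volume t t₀)
    (hf : ∀ s ∈ Set.Ico t t₀, HasDerivAt f (f' s) s)
    (hode : ∀ s ∈ Set.Ico t t₀, -f' s ≤ (1 / 2) * R s - f s / (2 * (t₀ - s)))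
    (hlim : Filter.Tendsto (fun t₁ => Real.sqrt (t₀ - t₁) * f t₁)
      (nhdsWithin t₀ (Set.Iio t₀)) (nhds 0)) :
    f t ≤ (1 / (2 * Real.sqrt (t₀ - t))) * ∫ s in t..t₀, Real.sqrt (t₀ - s) * R s := by
  set w : ℝ → ℝ := fun s => Real.sqrt (t₀ - s) * R s with hw
  set F : ℝ → ℝ := fun x => ∫ s in t..x, w s with hF
  set g : ℝ → ℝ := fun s => Real.sqrt (t₀ - s) * f s with hg
  set H : ℝ → ℝ := fun s => g s + (1/2) * F s with hH
  -- continuity of w on Ico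
  have hwcont : ContinuousOn w (Ico t t₀) :=
    ((continuous_const.sub continuous_id).sqrt.continuousOn).mul hR
  -- derivative of g on Ico
  have hgd : ∀ s ∈ Ico t t₀,
      HasDerivAt g (-f s / (2 * Real.sqrt (t₀ - s)) + Real.sqrt (t₀ - s) * f' s) s := by
    intro s hs
    have hs0 : (0:ℝ) < t₀ - s := by linarith [hs.2]
    have hsq : HasDerivAt (fun x : ℝ => Real.sqrt (t₀ - x))
        (-(1 / (2 * Real.sqrt (t₀ - s)))) s := by
      have h1 : HasDerivAt (fun x : ℝ => t₀ - x) (-1) s := by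
        simpa using (hasDerivAt_id s).const_sub t₀
      have := (Real.hasDerivAt_sqrt (ne_of_gt hs0)).comp s h1
      exact this.congr_deriv (by ring)
    have := hsq.mul (hf s hs)
    refine this.congr_deriv ?_
    first
    | (field_simp; ring)
    | field_simp
  -- key inequality: g' + (1/2) w ≥ 0 on Ico
  have hkey : ∀ s ∈ Ico t t₀,
      0 ≤ -f s / (2 * Real.sqrt (t₀ - s)) + Real.sqrt (t₀ - s) * f' s + (1/2) * w s := by
    intro s hs
    have hs0 : (0:ℝ) < t₀ - s := by linarith [hs.2]
    have hsq : (0:ℝ) < Real.sqrt (t₀ - s) := Real.sqrt_pos.mpr hs0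
    have hsqsq : Real.sqrt (t₀ - s) * Real.sqrt (t₀ - s) = t₀ - s :=
      Real.mul_self_sqrt hs0.le
    have h1 := hode s hs
    -- f' s ≥ f s / (2(t₀-s)) - R s / 2
    have h2 : f s / (2 * (t₀ - s)) - (1/2) * R s ≤ f' s := by linarith
    have h3 : Real.sqrt (t₀ - s) * (f s / (2 * (t₀ - s)) - (1/2) * R s)
        ≤ Real.sqrt (t₀ - s) * f' s := by
      exact mul_le_mul_of_nonneg_left h2 hsq.le
    have h4 : Real.sqrt (t₀ - s) * (f s / (2 * (t₀ - s)))
        = f s / (2 * Real.sqrt (t₀ - s)) := by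
      rw [eq_div_iff (by positivity)]
      field_simp
      linear_combination f s * hsqsq
    rw [mul_sub, h4] at h3
    simp only [hw]
    ring_nf at h3 ⊢
    linarith
  -- integrability of w on subintervals, derivative of F on interior
  have hIcoOpen : ∀ s ∈ Ioo t t₀, HasDerivAt F (w s) s := by
    intro s hs
    have hsub : Ioo t t₀ ⊆ Ico t t₀ := Ioo_subset_Ico_self
    have hwc : ContinuousOn w (Ioo t t₀) := hwcont.mono hsub
    have hsm : StronglyMeasurableAtFilter w (nhds s) volume :=
      hwc.stronglyMeasurableAtFilter isOpen_Ioo s hs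
    have hca : ContinuousAt w s :=
      hwc.continuousAt (isOpen_Ioo.mem_nhds hs)
    have hii : IntervalIntegrable w volume t s := by
      apply hint.mono_set
      rw [uIcc_of_le hs.1.le, uIcc_of_le h.le]
      exact Icc_subset_Icc le_rfl hs.2.le
    exact intervalIntegral.integral_hasDerivAt_right hii hsm hca
  -- H continuous on Icc restricted... we work on Ico
  have hgcont : ContinuousOn g (Ico t t₀) := by
    intro s hs
    exact ((hgd s hs).continuousAt).continuousWithinAt
  have hFcontIcc : ContinuousOn F (Icc t t₀) := by
    have := intervalIntegral.continuousOn_primitive_interval'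
      (μ := volume) (f := w) (b₁ := t) (b₂ := t₀) hint
      (by rw [uIcc_of_le h.le]; exact left_mem_Icc.mpr h.le)
    rwa [uIcc_of_le h.le] at this
  have hHcont : ContinuousOn H (Ico t t₀) :=
    hgcont.add (continuousOn_const.mul (hFcontIcc.mono Ico_subset_Icc_self))
  -- H monotone on Ico
  have hmono : MonotoneOn H (Ico t t₀) := by
    have hdiff : DifferentiableOn ℝ H (interior (Ico t t₀)) := by
      rw [interior_Ico]
      intro s hs
      have hs' : s ∈ Ico t t₀ := Ioo_subset_Ico_self hs
      exact (((hgd s hs').add ((hIcoOpen s hs).const_mul (1/2))).differentiableAt).differentiableWithinAt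
    apply monotoneOn_of_deriv_nonneg (convex_Ico t t₀) hHcont hdiff
    intro s hs
    rw [interior_Ico] at hs
    have hs' : s ∈ Ico t t₀ := Ioo_subset_Ico_self hs
    have hd : HasDerivAt H
        (-f s / (2 * Real.sqrt (t₀ - s)) + Real.sqrt (t₀ - s) * f' s + (1/2) * w s) s := by
      have := (hgd s hs').add ((hIcoOpen s hs).const_mul (1/2))
      refine this.congr_deriv ?_
      try ring
    rw [hd.deriv]
    exact hkey s hs'
  -- so g t = H t ≤ H t₁ for t₁ ∈ Ico
  have hHt : H t = g t := by
    simp only [hH, hF, intervalIntegral.integral_same]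
    ring
  have hbound : ∀ t₁ ∈ Ico t t₀, g t ≤ g t₁ + (1/2) * F t₁ := by
    intro t₁ ht₁
    have := hmono (left_mem_Ico.mpr h) ht₁ ht₁.1
    rw [hHt] at this
    exact this
  -- limit as t₁ → t₀⁻
  have hne : (nhdsWithin t₀ (Iio t₀)).NeBot := nhdsLT_neBot t₀
  have hFlim : Tendsto F (nhdsWithin t₀ (Iio t₀)) (nhds (F t₀)) := by
    have hc : ContinuousWithinAt F (Icc t t₀) t₀ :=
      hFcontIcc t₀ (right_mem_Icc.mpr h.le)
    apply hc.tendsto.mono_left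
    rw [← nhdsWithin_inter_of_mem' (t := Ioi t)
      (mem_nhdsWithin_of_mem_nhds (Ioi_mem_nhds h))]
    apply nhdsWithin_mono
    intro x hx
    exact ⟨hx.2.le, hx.1.le⟩
  have hHlim : Tendsto (fun t₁ => g t₁ + (1/2) * F t₁) (nhdsWithin t₀ (Iio t₀))
      (nhds (0 + (1/2) * F t₀)) := hlim.add (hFlim.const_mul _)
  have hgle : g t ≤ 0 + (1/2) * F t₀ := by
    apply ge_of_tendsto hHlim
    filter_upwards [self_mem_nhdsWithin,
      mem_nhdsWithin_of_mem_nhds (Ioi_mem_nhds h)] with x hx1 hx2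
    exact hbound x ⟨le_of_lt hx2, hx1⟩
  -- conclude
  have hsqt : (0:ℝ) < Real.sqrt (t₀ - t) := Real.sqrt_pos.mpr (by linarith)
  have hgle' : Real.sqrt (t₀ - t) * f t ≤ (1/2) * F t₀ := by
    simpa [hg] using hgle
  rw [show (1 / (2 * Real.sqrt (t₀ - t))) * F t₀
      = ((1/2) * F t₀) / Real.sqrt (t₀ - t) by field_simp,
    le_div_iff₀ hsqt, mul_comm]
  exact hgle'
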